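/- arXiv:1206.4982 — 2 statements merged into one kernel-verified Lean document; each statement's English description precedes it below -/
import Mathlib

section
/- For any matrix ξ in sl(2, ℝ) with two distinct real eigenvalues −c and c (c > 0), the convex hull of the adjoint orbit {g ξ g⁻¹ : g ∈ SL(2, ℝ)} is all of sl(2, ℝ). -/
open Polynomial

set_option maxHeartbeats 1000000 in
/-- Any trace-zero real 2×2 matrix with determinant `−e²` (`e > 0`) is an
`SL(2,ℝ)`-conjugate of `diag(e, −e)`. -/
lemma conj_diag (e : ℝ) (he : 0 < e) (B : Matrix (Fin 2) (Fin 2) ℝ)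
    (htr : B.trace = 0) (hdet : B.det = -e ^ 2) :
    ∃ g : Matrix.SpecialLinearGroup (Fin 2) ℝ,
      B = (g : Matrix (Fin 2) (Fin 2) ℝ) * !![e, 0; 0, -e] *
        ((g⁻¹ : Matrix.SpecialLinearGroup (Fin 2) ℝ) : Matrix (Fin 2) (Fin 2) ℝ) := by
  have he' : e ≠ 0 := ne_of_gt he
  have h11 : B 1 1 = -(B 0 0) := by
    have := Matrix.trace_fin_two B
    rw [htr] at this; linarith
  obtain ⟨a, b, d, hB⟩ : ∃ a b d, B = !![a, b; d, -a] :=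
    ⟨B 0 0, B 0 1, B 1 0, by rw [← h11]; exact Matrix.eta_fin_two B⟩
  subst hB
  rw [Matrix.det_fin_two_of] at hdet
  have hs : a ^ 2 + b * d = e ^ 2 := by nlinarith [hdet]
  by_cases hbz : b = 0
  · have hbd : b * d = 0 := by rw [hbz]; ring
    have ha2 : (a - e) * (a + e) = 0 := by linear_combination hs - hbd
    rcases mul_eq_zero.mp ha2 with h | h
    · -- a = e
      have hae : a = e := by linarith
      refine ⟨⟨!![1, 0; d / (2 * e), 1], by norm_num [Matrix.det_fin_two_of]⟩, ?_⟩
      rw [Matrix.SpecialLinearGroup.coe_inv (A := ⟨!![1, 0; d / (2 * e), 1], by norm_num [Matrix.det_fin_two_of]⟩)]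
      ext i j
      fin_cases i <;> fin_cases j <;>
        simp [Matrix.adjugate_fin_two_of, Matrix.mul_apply, Fin.sum_univ_two, hbz, hae] <;>
        field_simp <;> ring
    · -- a = -e
      have hae : a = -e := by linarith
      refine ⟨⟨!![0, -1; 1, d / (2 * e)], by norm_num [Matrix.det_fin_two_of]⟩, ?_⟩
      rw [Matrix.SpecialLinearGroup.coe_inv (A := ⟨!![0, -1; 1, d / (2 * e)], by norm_num [Matrix.det_fin_two_of]⟩)]
      ext i j
      fin_cases i <;> fin_cases j <;>
        simp [Matrix.adjugate_fin_two_of, Matrix.mul_apply, Fin.sum_univ_two, hbz, hae] <;>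
        field_simp <;> ring
  · refine ⟨⟨!![-1 / (2 * e), b; -(e - a) / (2 * b * e), -e - a],
      by rw [Matrix.det_fin_two_of]; field_simp; ring⟩, ?_⟩
    rw [Matrix.SpecialLinearGroup.coe_inv (A := ⟨!![-1 / (2 * e), b; -(e - a) / (2 * b * e), -e - a],
      by rw [Matrix.det_fin_two_of]; field_simp; ring⟩)]
    ext i j
    fin_cases i <;> fin_cases j <;>
      simp [Matrix.adjugate_fin_two_of, Matrix.mul_apply, Fin.sum_univ_two] <;>
      field_simp <;>
      (try ring) <;> (try linear_combination 2 * e * hs) <;> (try linear_combination 2 * hs)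

set_option maxHeartbeats 1000000 in
/-- For any `ξ ∈ sl(2, ℝ)` with two distinct real eigenvalues `−c` and `c` (`c > 0`),
i.e. with characteristic polynomial `X² − c²`, the convex hull of the adjoint orbit
`{g ξ g⁻¹ : g ∈ SL(2, ℝ)}` is all of `sl(2, ℝ)`. -/
theorem stmt_4 (c : ℝ) (hc : 0 < c) (ξ : Matrix (Fin 2) (Fin 2) ℝ)
    (hξ : ξ.trace = 0) (hchar : ξ.charpoly = X ^ 2 - C (c ^ 2)) :
    convexHull ℝ {A : Matrix (Fin 2) (Fin 2) ℝ |
        ∃ g : Matrix.SpecialLinearGroup (Fin 2) ℝ,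
          A = (g : Matrix (Fin 2) (Fin 2) ℝ) * ξ *
            ((g⁻¹ : Matrix.SpecialLinearGroup (Fin 2) ℝ) : Matrix (Fin 2) (Fin 2) ℝ)}
      = {A : Matrix (Fin 2) (Fin 2) ℝ | A.trace = 0} := by
  set S := {A : Matrix (Fin 2) (Fin 2) ℝ |
    ∃ g : Matrix.SpecialLinearGroup (Fin 2) ℝ,
      A = (g : Matrix (Fin 2) (Fin 2) ℝ) * ξ *
        ((g⁻¹ : Matrix.SpecialLinearGroup (Fin 2) ℝ) : Matrix (Fin 2) (Fin 2) ℝ)} with hS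
  have hdet : ξ.det = -c ^ 2 := by
    have h2 := Matrix.det_eq_sign_charpoly_coeff ξ
    have hc0 : ((X : ℝ[X]) ^ 2 - C (c ^ 2)).coeff 0 = -c ^ 2 := by
      rw [Polynomial.coeff_sub, Polynomial.coeff_X_pow, Polynomial.coeff_C]
      norm_num
    rw [hchar, hc0] at h2
    simpa using h2
  obtain ⟨h, hh⟩ := conj_diag c hc ξ hξ hdet
  have h1 : ((h⁻¹ : Matrix.SpecialLinearGroup (Fin 2) ℝ) : Matrix (Fin 2) (Fin 2) ℝ) *
      (h : Matrix (Fin 2) (Fin 2) ℝ) = 1 := by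
    rw [← Matrix.SpecialLinearGroup.coe_mul, inv_mul_cancel, Matrix.SpecialLinearGroup.coe_one]
  have mem_orbit : ∀ B : Matrix (Fin 2) (Fin 2) ℝ,
      B.trace = 0 → B.det = -c ^ 2 → B ∈ S := by
    intro B htrB hdetB
    obtain ⟨g, hg⟩ := conj_diag c hc B htrB hdetB
    refine ⟨g * h⁻¹, ?_⟩
    have hD : !![c, 0; 0, -c] =
        ((h⁻¹ : Matrix.SpecialLinearGroup (Fin 2) ℝ) : Matrix (Fin 2) (Fin 2) ℝ) * ξ *
          (h : Matrix (Fin 2) (Fin 2) ℝ) := by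
      rw [hh]
      simp only [← mul_assoc]
      rw [h1, one_mul, mul_assoc, h1, mul_one]
    have hcoe : ((g * h⁻¹ : Matrix.SpecialLinearGroup (Fin 2) ℝ) :
        Matrix (Fin 2) (Fin 2) ℝ) = (g : Matrix (Fin 2) (Fin 2) ℝ) *
          ((h⁻¹ : Matrix.SpecialLinearGroup (Fin 2) ℝ) : Matrix (Fin 2) (Fin 2) ℝ) :=
      Matrix.SpecialLinearGroup.coe_mul g h⁻¹
    have hcoe' : (((g * h⁻¹)⁻¹ : Matrix.SpecialLinearGroup (Fin 2) ℝ) :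
        Matrix (Fin 2) (Fin 2) ℝ) = (h : Matrix (Fin 2) (Fin 2) ℝ) *
          ((g⁻¹ : Matrix.SpecialLinearGroup (Fin 2) ℝ) : Matrix (Fin 2) (Fin 2) ℝ) := by
      rw [mul_inv_rev, inv_inv, Matrix.SpecialLinearGroup.coe_mul]
    rw [hg, hD, hcoe, hcoe']
    simp only [mul_assoc]
  -- every trace-zero matrix is a midpoint of two matrices in S
  have midpt : ∀ A : Matrix (Fin 2) (Fin 2) ℝ, A.trace = 0 →
      ∃ X Y : Matrix (Fin 2) (Fin 2) ℝ, X ∈ S ∧ Y ∈ S ∧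
        A = (1 / 2 : ℝ) • X + (1 / 2 : ℝ) • Y := by
    intro A htrA
    have h11 : A 1 1 = -(A 0 0) := by
      have := Matrix.trace_fin_two A
      rw [htrA] at this; linarith
    obtain ⟨a, b, d, hA⟩ : ∃ a b d, A = !![a, b; d, -a] :=
      ⟨A 0 0, A 0 1, A 1 0, by rw [← h11]; exact Matrix.eta_fin_two A⟩
    subst hA
    by_cases hpos : 0 < a ^ 2 + b * d
    · obtain ⟨e, he0, he2⟩ : ∃ e : ℝ, 0 < e ∧ e ^ 2 = a ^ 2 + b * d :=
        ⟨Real.sqrt (a ^ 2 + b * d), Real.sqrt_pos.mpr hpos, Real.sq_sqrt hpos.le⟩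
      have htrA' : (!![a, b; d, -a] : Matrix (Fin 2) (Fin 2) ℝ).trace = 0 := by
        rw [Matrix.trace_fin_two_of]; ring
      have hdetA : (!![a, b; d, -a] : Matrix (Fin 2) (Fin 2) ℝ).det = -e ^ 2 := by
        rw [Matrix.det_fin_two_of, he2]; ring
      obtain ⟨g, hg⟩ := conj_diag e he0 _ htrA' hdetA
      have hg1 : ((g⁻¹ : Matrix.SpecialLinearGroup (Fin 2) ℝ) : Matrix (Fin 2) (Fin 2) ℝ) *
          (g : Matrix (Fin 2) (Fin 2) ℝ) = 1 := by
        rw [← Matrix.SpecialLinearGroup.coe_mul, inv_mul_cancel,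
          Matrix.SpecialLinearGroup.coe_one]
      refine ⟨(g : Matrix (Fin 2) (Fin 2) ℝ) * !![e, c ^ 2 - e ^ 2; 1, -e] *
          ((g⁻¹ : Matrix.SpecialLinearGroup (Fin 2) ℝ) : Matrix (Fin 2) (Fin 2) ℝ),
        (g : Matrix (Fin 2) (Fin 2) ℝ) * !![e, -(c ^ 2 - e ^ 2); -1, -e] *
          ((g⁻¹ : Matrix.SpecialLinearGroup (Fin 2) ℝ) : Matrix (Fin 2) (Fin 2) ℝ),
        ?_, ?_, ?_⟩
      · refine mem_orbit _ ?_ ?_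
        · rw [Matrix.trace_mul_comm, ← mul_assoc, hg1, one_mul, Matrix.trace_fin_two_of]
          ring
        · rw [Matrix.det_mul, Matrix.det_mul, Matrix.SpecialLinearGroup.det_coe,
            Matrix.SpecialLinearGroup.det_coe, Matrix.det_fin_two_of]
          ring
      · refine mem_orbit _ ?_ ?_
        · rw [Matrix.trace_mul_comm, ← mul_assoc, hg1, one_mul, Matrix.trace_fin_two_of]
          ring
        · rw [Matrix.det_mul, Matrix.det_mul, Matrix.SpecialLinearGroup.det_coe,
            Matrix.SpecialLinearGroup.det_coe, Matrix.det_fin_two_of]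
          ring
      · rw [hg]
        have hsplit : (!![e, 0; 0, -e] : Matrix (Fin 2) (Fin 2) ℝ) =
            (1 / 2 : ℝ) • !![e, c ^ 2 - e ^ 2; 1, -e] +
              (1 / 2 : ℝ) • !![e, -(c ^ 2 - e ^ 2); -1, -e] := by
          ext i j
          fin_cases i <;> fin_cases j <;>
            simp [Matrix.add_apply, Matrix.smul_apply] <;> ring
        rw [hsplit]
        simp only [Matrix.mul_add, Matrix.add_mul, Matrix.mul_smul, Matrix.smul_mul]
    · push_neg at hpos
      have hK0 : 0 < c ^ 2 - (a ^ 2 + b * d) := by nlinarith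
      obtain ⟨t, ht0, ht2⟩ : ∃ t : ℝ, 0 < t ∧ t ^ 2 = c ^ 2 - (a ^ 2 + b * d) :=
        ⟨Real.sqrt _, Real.sqrt_pos.mpr hK0, Real.sq_sqrt hK0.le⟩
      by_cases hbz : b = 0
      · have hbd : b * d = 0 := by rw [hbz]; ring
        have ha2 : a ^ 2 ≤ 0 := by linarith [hpos, hbd]
        have ha0 : a = 0 := by
          have h0 : a ^ 2 = 0 := le_antisymm ha2 (sq_nonneg a)
          exact sq_eq_zero_iff.mp h0
        refine ⟨!![c, 0; d, -c], !![-c, 0; d, c], ?_, ?_, ?_⟩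
        · exact mem_orbit _ (by rw [Matrix.trace_fin_two_of]; ring)
            (by rw [Matrix.det_fin_two_of]; ring)
        · exact mem_orbit _ (by rw [Matrix.trace_fin_two_of]; ring)
            (by rw [Matrix.det_fin_two_of]; ring)
        · rw [hbz, ha0]
          ext i j
          fin_cases i <;> fin_cases j <;>
            simp [Matrix.add_apply, Matrix.smul_apply] <;> ring
      · refine ⟨!![a + t, b; d - 2 * a * t / b, -a - t],
          !![a - t, b; d + 2 * a * t / b, -a + t], ?_, ?_, ?_⟩
        · refine mem_orbit _ (by rw [Matrix.trace_fin_two_of]; ring) ?_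
          rw [Matrix.det_fin_two_of]
          field_simp
          nlinarith [ht2]
        · refine mem_orbit _ (by rw [Matrix.trace_fin_two_of]; ring) ?_
          rw [Matrix.det_fin_two_of]
          field_simp
          nlinarith [ht2]
        · ext i j
          fin_cases i <;> fin_cases j <;>
            simp [Matrix.add_apply, Matrix.smul_apply] <;> field_simp <;> ring
  ext A
  simp only [Set.mem_setOf_eq]
  constructor
  · intro hAmem
    have hsub : convexHull ℝ S ⊆ {A : Matrix (Fin 2) (Fin 2) ℝ | A.trace = 0} := by
      apply convexHull_min
      · rintro B ⟨g, rfl⟩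
        have hg1 : ((g⁻¹ : Matrix.SpecialLinearGroup (Fin 2) ℝ) :
            Matrix (Fin 2) (Fin 2) ℝ) * (g : Matrix (Fin 2) (Fin 2) ℝ) = 1 := by
          rw [← Matrix.SpecialLinearGroup.coe_mul, inv_mul_cancel,
            Matrix.SpecialLinearGroup.coe_one]
        show Matrix.trace _ = 0
        rw [Matrix.trace_mul_comm, ← mul_assoc, hg1, one_mul, hξ]
      · intro x hx y hy p q hp hq hpq
        simp only [Set.mem_setOf_eq] at hx hy ⊢
        rw [Matrix.trace_add, Matrix.trace_smul, Matrix.trace_smul, hx, hy]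
        simp
    exact hsub hAmem
  · intro htrA
    obtain ⟨X, Y, hX, hY, hXY⟩ := midpt A htrA
    rw [hXY]
    exact (convex_convexHull ℝ S) (subset_convexHull ℝ S hX) (subset_convexHull ℝ S hY)
      (by norm_num) (by norm_num) (by norm_num)
end

section
/- For n ≥ 4, the matrix ζ = a(−E_{11} − E_{22} + E_{(n−1)(n−1)} + E_{nn}) + E_{1n} + E_{2(n−1)} has characteristic polynomial (−λ)^{n−4}(λ² − a²)² for any real a. In particular, ζ is nilpotent if and only if a = 0. -/
set_option maxHeartbeats 1000000

open Polynomial Matrix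

/-- For `n ≥ 4`, the matrix `ζ = a(−E₁₁ − E₂₂ + E₍ₙ₋₁₎₍ₙ₋₁₎ + Eₙₙ) + E₁ₙ + E₂₍ₙ₋₁₎` has
characteristic polynomial `(−λ)^(n−4)(λ² − a²)²`, i.e. `charpoly ζ = X^(n-4)(X² − a²)²`;
in particular `ζ` is nilpotent if and only if `a = 0`. -/
theorem stmt_12 (n : ℕ) (hn : 4 ≤ n) (a : ℝ)
    (ζ : Matrix (Fin n) (Fin n) ℝ)
    (hζ : ζ = a • (-(Matrix.single ⟨0, by omega⟩ ⟨0, by omega⟩ (1 : ℝ))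
        - Matrix.single ⟨1, by omega⟩ ⟨1, by omega⟩ 1
        + Matrix.single ⟨n - 2, by omega⟩ ⟨n - 2, by omega⟩ 1
        + Matrix.single ⟨n - 1, by omega⟩ ⟨n - 1, by omega⟩ 1)
      + Matrix.single ⟨0, by omega⟩ ⟨n - 1, by omega⟩ 1
      + Matrix.single ⟨1, by omega⟩ ⟨n - 2, by omega⟩ 1) :
    ζ.charpoly = Polynomial.X ^ (n - 4) * (Polynomial.X ^ 2 - Polynomial.C (a ^ 2)) ^ 2 ∧
    (IsNilpotent ζ ↔ a = 0) := by
  have h0 : (0 : ℕ) < n := by omega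
  have h1 : (1 : ℕ) < n := by omega
  have h2 : n - 2 < n := by omega
  have h3 : n - 1 < n := by omega
  -- the matrix is upper triangular
  have htri : ζ.BlockTriangular id := by
    intro i j hij
    simp only [id] at hij
    have hij' := Fin.lt_iff_val_lt_val.mp hij
    simp only [hζ, Matrix.add_apply, Matrix.sub_apply, Matrix.neg_apply, Matrix.smul_apply,
      Matrix.single, Matrix.of_apply, Fin.ext_iff, Fin.val_mk, smul_eq_mul]
    split_ifs <;> first | ring1 | (exfalso; omega)
  -- its diagonal
  have hdiag : ∀ i : Fin n, ζ i i =
      if i.val = 0 ∨ i.val = 1 then -a else if i.val = n - 2 ∨ i.val = n - 1 then a else 0 := by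
    intro i
    simp only [hζ, Matrix.add_apply, Matrix.sub_apply, Matrix.neg_apply, Matrix.smul_apply,
      Matrix.single, Matrix.of_apply, Fin.ext_iff, Fin.val_mk, smul_eq_mul]
    split_ifs <;> first | ring1 | (exfalso; omega)
  have hne01 : (⟨0, h0⟩ : Fin n) ≠ ⟨1, h1⟩ := by
    simp only [ne_eq, Fin.mk.injEq]; omega
  have hne02 : (⟨0, h0⟩ : Fin n) ≠ ⟨n - 2, h2⟩ := by
    simp only [ne_eq, Fin.mk.injEq]; omega
  have hne03 : (⟨0, h0⟩ : Fin n) ≠ ⟨n - 1, h3⟩ := by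
    simp only [ne_eq, Fin.mk.injEq]; omega
  have hne12 : (⟨1, h1⟩ : Fin n) ≠ ⟨n - 2, h2⟩ := by
    simp only [ne_eq, Fin.mk.injEq]; omega
  have hne13 : (⟨1, h1⟩ : Fin n) ≠ ⟨n - 1, h3⟩ := by
    simp only [ne_eq, Fin.mk.injEq]; omega
  have hne23 : (⟨n - 2, h2⟩ : Fin n) ≠ ⟨n - 1, h3⟩ := by
    simp only [ne_eq, Fin.mk.injEq]; omega
  have hcard : ({⟨0, h0⟩, ⟨1, h1⟩, ⟨n - 2, h2⟩, ⟨n - 1, h3⟩} : Finset (Fin n)).card = 4 := by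
    rw [Finset.card_insert_of_notMem (by simp [hne01, hne02, hne03]),
      Finset.card_insert_of_notMem (by simp [hne12, hne13]),
      Finset.card_insert_of_notMem (by simp [hne23]), Finset.card_singleton]
  -- the characteristic polynomial as a product over the diagonal
  have hcp : ζ.charpoly = ∏ i : Fin n, (X - C (ζ i i)) := charpoly_of_upperTriangular ζ htri
  have hsplit : ζ.charpoly =
      (∏ i ∈ ({⟨0, h0⟩, ⟨1, h1⟩, ⟨n - 2, h2⟩, ⟨n - 1, h3⟩} : Finset (Fin n))ᶜ, (X - C (ζ i i))) *
        ∏ i ∈ ({⟨0, h0⟩, ⟨1, h1⟩, ⟨n - 2, h2⟩, ⟨n - 1, h3⟩} : Finset (Fin n)), (X - C (ζ i i)) := by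
    rw [hcp, Finset.prod_compl_mul_prod]
  have hprod_compl :
      (∏ i ∈ ({⟨0, h0⟩, ⟨1, h1⟩, ⟨n - 2, h2⟩, ⟨n - 1, h3⟩} : Finset (Fin n))ᶜ, (X - C (ζ i i)))
        = X ^ (n - 4) := by
    have hone : ∀ i ∈ ({⟨0, h0⟩, ⟨1, h1⟩, ⟨n - 2, h2⟩, ⟨n - 1, h3⟩} : Finset (Fin n))ᶜ,
        (X - C (ζ i i)) = (X : ℝ[X]) := by
      intro i hi
      simp only [Finset.mem_compl, Finset.mem_insert, Finset.mem_singleton, not_or,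
        Fin.ext_iff, Fin.val_mk] at hi
      obtain ⟨e0, e1, e2, e3⟩ := hi
      rw [hdiag i, if_neg (by omega), if_neg (by omega), map_zero, sub_zero]
    rw [Finset.prod_congr rfl hone, Finset.prod_const, Finset.card_compl, hcard,
      Fintype.card_fin]
  have c0 : ((⟨0, h0⟩ : Fin n) : ℕ) = 0 ∨ ((⟨0, h0⟩ : Fin n) : ℕ) = 1 := Or.inl rfl
  have c1 : ((⟨1, h1⟩ : Fin n) : ℕ) = 0 ∨ ((⟨1, h1⟩ : Fin n) : ℕ) = 1 := Or.inr rfl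
  have c2f : ¬(((⟨n - 2, h2⟩ : Fin n) : ℕ) = 0 ∨ ((⟨n - 2, h2⟩ : Fin n) : ℕ) = 1) := by
    simp only [Fin.val_mk]; omega
  have c2t : ((⟨n - 2, h2⟩ : Fin n) : ℕ) = n - 2 ∨ ((⟨n - 2, h2⟩ : Fin n) : ℕ) = n - 1 :=
    Or.inl rfl
  have c3f : ¬(((⟨n - 1, h3⟩ : Fin n) : ℕ) = 0 ∨ ((⟨n - 1, h3⟩ : Fin n) : ℕ) = 1) := by
    simp only [Fin.val_mk]; omega
  have c3t : ((⟨n - 1, h3⟩ : Fin n) : ℕ) = n - 2 ∨ ((⟨n - 1, h3⟩ : Fin n) : ℕ) = n - 1 :=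
    Or.inr rfl
  have hv0 : ζ ⟨0, h0⟩ ⟨0, h0⟩ = -a := by rw [hdiag, if_pos c0]
  have hv1 : ζ ⟨1, h1⟩ ⟨1, h1⟩ = -a := by rw [hdiag, if_pos c1]
  have hv2 : ζ ⟨n - 2, h2⟩ ⟨n - 2, h2⟩ = a := by rw [hdiag, if_neg c2f, if_pos c2t]
  have hv3 : ζ ⟨n - 1, h3⟩ ⟨n - 1, h3⟩ = a := by rw [hdiag, if_neg c3f, if_pos c3t]
  have hprod_s :
      (∏ i ∈ ({⟨0, h0⟩, ⟨1, h1⟩, ⟨n - 2, h2⟩, ⟨n - 1, h3⟩} : Finset (Fin n)), (X - C (ζ i i)))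
        = (X ^ 2 - C (a ^ 2)) ^ 2 := by
    rw [Finset.prod_insert (by simp [hne01, hne02, hne03]),
      Finset.prod_insert (by simp [hne12, hne13]),
      Finset.prod_insert (by simp [hne23]), Finset.prod_singleton,
      hv0, hv1, hv2, hv3, map_neg, map_pow]
    ring
  have hchar : ζ.charpoly = X ^ (n - 4) * (X ^ 2 - C (a ^ 2)) ^ 2 := by
    rw [hsplit, hprod_compl, hprod_s]
  refine ⟨hchar, ?_, ?_⟩
  · -- nilpotent → a = 0
    intro hnil
    have hred := Matrix.isNilpotent_charpoly_sub_pow_of_isNilpotent hnil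
    have hzero : ζ.charpoly - X ^ (Fintype.card (Fin n)) = 0 := hred.eq_zero
    have hXn : ζ.charpoly = X ^ n := by
      have := sub_eq_zero.mp hzero
      rwa [Fintype.card_fin] at this
    have heval : (X ^ (n - 4) * ((X:ℝ[X]) ^ 2 - C (a ^ 2)) ^ 2).eval a
        = ((X:ℝ[X]) ^ n).eval a := by
      rw [← hchar, hXn]
    simp only [eval_mul, eval_pow, eval_sub, eval_X, eval_C, sub_self] at heval
    have hn0 : a ^ n = 0 := by
      rw [← heval]; ring
    exact pow_eq_zero_iff (by omega) |>.mp hn0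
  · -- a = 0 → nilpotent
    intro ha
    have hXn : ζ.charpoly = X ^ n := by
      rw [hchar, ha]
      simp only [ne_eq, OfNat.ofNat_ne_zero, not_false_eq_true, zero_pow, map_zero, sub_zero]
      rw [← pow_mul, ← pow_add]
      congr 1
      omega
    refine ⟨n, ?_⟩
    have hCH := ζ.aeval_self_charpoly
    rwa [hXn, map_pow, aeval_X] at hCH
end
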